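/- Let d ≥ 3 and let E be a totally geodesic distribution of codimension at most one on the unit sphere S of a d-dimensional real inner product space, with singular set X = {x ∈ S : E_x = x^⊥}. Then X coincides with the intersection of its linear span with S: span(X) ∩ S = X. In particular, X is either empty or a great subsphere of S. -/

import Mathlib

open scoped RealInnerProductSpace

/-- The singular set `X` of a totally geodesic distribution of codimension
at most one on the unit sphere of a `d`-dimensional real inner product space (`d ≥ 3`)
satisfies `span(X) ∩ S = X`. -/
theorem stmt_4
    {V : Type*} [NormedAddCommGroup V] [InnerProductSpace ℝ V] [FiniteDimensional ℝ V]
    (d : ℕ) (hd : 3 ≤ d) (hdim : Module.finrank ℝ V = d)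
    (E : V → Submodule ℝ V)
    (hsub : ∀ x : V, ‖x‖ = 1 → E x ≤ (Submodule.span ℝ {x})ᗮ)
    (hcodim : ∀ x : V, ‖x‖ = 1 → d - 2 ≤ Module.finrank ℝ (E x))
    (htg : ∀ x : V, ‖x‖ = 1 → ∀ w ∈ E x, ‖w‖ = 1 → ∀ t : ℝ,
      (-(Real.sin t) • x + Real.cos t • w) ∈ E (Real.cos t • x + Real.sin t • w)) :
    (↑(Submodule.span ℝ {x : V | ‖x‖ = 1 ∧ E x = (Submodule.span ℝ {x})ᗮ}) ∩
        {y : V | ‖y‖ = 1})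
      = {x : V | ‖x‖ = 1 ∧ E x = (Submodule.span ℝ {x})ᗮ} := by
  set X : Set V := {x : V | ‖x‖ = 1 ∧ E x = (Submodule.span ℝ {x})ᗮ} with hX
  -- Key lemma: for x ∈ X and any unit p, x - ⟪x,p⟫ • p ∈ E p.
  have key : ∀ x ∈ X, ∀ p : V, ‖p‖ = 1 → x - ⟪x, p⟫ • p ∈ E p := by
    intro x hx p hp
    obtain ⟨hx1, hx2⟩ := hx
    set c : ℝ := ⟪x, p⟫ with hc
    set u : V := p - c • x with hu
    have hxu : ⟪x, u⟫ = 0 := by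
      simp [hu, inner_sub_right, real_inner_smul_right, real_inner_self_eq_norm_sq, hx1,
        real_inner_comm p x, hc]
    have hnorm : c ^ 2 + ‖u‖ ^ 2 = 1 := by
      have hpd : p = c • x + u := by simp [hu]
      have h2 : ‖p‖ ^ 2 = ‖c • x‖ ^ 2 + ‖u‖ ^ 2 := by
        rw [hpd]
        have := norm_add_sq_real (c • x) u
        rw [real_inner_smul_left, hxu] at this
        simpa using this
      have h3 : ‖c • x‖ ^ 2 = c ^ 2 := by
        rw [norm_smul, hx1, mul_one, Real.norm_eq_abs, sq_abs]
      rw [hp, h3, one_pow] at h2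
      linarith
    by_cases hu0 : u = 0
    · -- p = c • x, with c = ±1; then x - c • p = 0.
      have hc2 : c ^ 2 = 1 := by simpa [hu0] using hnorm
      have hpx : p = c • x := by
        have := hu0
        rw [hu, sub_eq_zero] at this
        exact this
      have hcc : c * c = 1 := by nlinarith
      have h0 : x - c • p = 0 := by
        rw [hpx, smul_smul, hcc, one_smul, sub_self]
      rw [h0]
      exact (E p).zero_mem
    · have hs : (0 : ℝ) < ‖u‖ := norm_pos_iff.mpr hu0
      set s : ℝ := ‖u‖ with hsdef
      set w : V := s⁻¹ • u with hw
      have hw1 : ‖w‖ = 1 := by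
        rw [hw, norm_smul, norm_inv, Real.norm_eq_abs, abs_of_pos hs]
        field_simp
        exact hsdef.symm
      have hxw : ⟪x, w⟫ = 0 := by
        rw [hw, real_inner_smul_right, hxu, mul_zero]
      have hwE : w ∈ E x := by
        rw [hx2, Submodule.mem_orthogonal]
        intro v hv
        rw [Submodule.mem_span_singleton] at hv
        obtain ⟨a, rfl⟩ := hv
        rw [real_inner_smul_left, hxw, mul_zero]
      -- parameters
      have hc1 : c ^ 2 ≤ 1 := by nlinarith [sq_nonneg s]
      have hcle : -1 ≤ c ∧ c ≤ 1 := abs_le.mp (by nlinarith [sq_abs c, abs_nonneg c])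
      set t : ℝ := Real.arccos c with ht
      have hcos : Real.cos t = c := Real.cos_arccos hcle.1 hcle.2
      have hsin : Real.sin t = s := by
        rw [ht, Real.sin_arccos]
        have : 1 - c ^ 2 = s ^ 2 := by linarith
        rw [this, Real.sqrt_sq hs.le]
      have hmem := htg x hx1 w hwE hw1 t
      rw [hcos, hsin] at hmem
      have hpt : c • x + s • w = p := by
        rw [hw, smul_smul, mul_inv_cancel₀ (ne_of_gt hs), one_smul, hu]
        abel
      rw [hpt] at hmem
      have hgoal : x - c • p = (-s) • (-s • x + c • w) := by
        have hsi : s * s⁻¹ = 1 := mul_inv_cancel₀ (ne_of_gt hs)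
        have hs2 : s * s = 1 - c * c := by nlinarith
        clear_value c u s w t
        rw [hw, hu]
        match_scalars
        · linear_combination (-1 : ℝ) * hs2 - c * c * hsi
        · linear_combination c * hsi
      rw [hgoal]
      exact (E p).smul_mem _ hmem
  -- Extend to the span by linearity.
  have key2 : ∀ y ∈ Submodule.span ℝ X, ∀ p : V, ‖p‖ = 1 → y - ⟪y, p⟫ • p ∈ E p := by
    intro y hy
    induction hy using Submodule.span_induction with
    | mem x hx => exact key x hx
    | zero => intro p hp; simpa using (E p).zero_mem
    | add a b ha hb iha ihb =>
        intro p hp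
        have := (E p).add_mem (iha p hp) (ihb p hp)
        have heq : a - ⟪a, p⟫ • p + (b - ⟪b, p⟫ • p) = a + b - ⟪a + b, p⟫ • p := by
          rw [inner_add_left, add_smul]; abel
        rwa [heq] at this
    | smul r a ha iha =>
        intro p hp
        have := (E p).smul_mem r (iha p hp)
        have heq : r • (a - ⟪a, p⟫ • p) = r • a - ⟪r • a, p⟫ • p := by
          rw [real_inner_smul_left, smul_sub, smul_smul]
        rwa [heq] at this
  apply Set.Subset.antisymm
  · rintro y ⟨hy, hy1⟩
    refine ⟨hy1, le_antisymm (hsub y hy1) ?_⟩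
    intro v hv
    by_cases hv0 : v = 0
    · simpa [hv0] using (E y).zero_mem
    · have hnv : (0 : ℝ) < ‖v‖ := norm_pos_iff.mpr hv0
      set v₁ : V := ‖v‖⁻¹ • v with hv₁
      have hv₁1 : ‖v₁‖ = 1 := by
        rw [hv₁, norm_smul, norm_inv, Real.norm_eq_abs, abs_of_pos hnv]
        field_simp
      have hyv : ⟪y, v⟫ = 0 := by
        rw [Submodule.mem_orthogonal] at hv
        exact hv y (Submodule.mem_span_singleton_self y)
      have hyv₁ : ⟪y, v₁⟫ = 0 := by
        rw [hv₁, real_inner_smul_right, hyv, mul_zero]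
      have hyE : y ∈ E v₁ := by
        have := key2 y hy v₁ hv₁1
        rwa [hyv₁, zero_smul, sub_zero] at this
      have := htg v₁ hv₁1 y hyE hy1 (Real.pi / 2)
      rw [Real.cos_pi_div_two, Real.sin_pi_div_two] at this
      simp only [zero_smul, one_smul, add_zero, zero_add, neg_smul] at this
      have hv₁E : v₁ ∈ E y := (E y).neg_mem_iff.mp (by simpa using this)
      have : v = ‖v‖ • v₁ := by
        rw [hv₁, smul_smul, mul_inv_cancel₀ (ne_of_gt hnv), one_smul]
      rw [this]
      exact (E y).smul_mem _ hv₁E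
  · intro x hx
    exact ⟨Submodule.subset_span hx, hx.1⟩
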